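/- For every real t > 0 and every complex λ, the characteristic functions of the walk at negative times converge: lim_{n→∞} ((1/N)·Σ_{k=0}^{N−1} exp( iλ·e^{iπ/N}·βω_k / n^{1/N} ))^{⌊nt⌋} = exp( i^N · λ^N · α · (−t) / N! ) = exp( −i^N λ^N α t / N! ). -/

import Mathlib

open Complex Real Filter Finset

private lemma sum_roots_pow (N : ℕ) (hN : 0 < N) (j : ℕ) (hj : j ≤ N) :
    ∑ k ∈ Finset.range N, Complex.exp (2 * Real.pi * Complex.I * k / N) ^ j
      = if j = 0 ∨ j = N then (N : ℂ) else 0 := by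
  set ζ := Complex.exp (2 * Real.pi * Complex.I / N) with hζdef
  have hζ : IsPrimitiveRoot ζ N := Complex.isPrimitiveRoot_exp N hN.ne'
  have hk : ∀ k : ℕ, Complex.exp (2 * Real.pi * Complex.I * k / N) = ζ ^ k := by
    intro k
    rw [hζdef, ← Complex.exp_nat_mul]
    congr 1
    ring
  have hswap : ∀ k : ℕ, (ζ ^ k) ^ j = (ζ ^ j) ^ k := fun k => by
    rw [← pow_mul, mul_comm, pow_mul]
  simp_rw [hk, hswap]
  by_cases h : j = 0 ∨ j = N
  · have h1 : ζ ^ j = 1 := by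
      rcases h with h | h
      · simp [h]
      · simp [h, hζ.pow_eq_one]
    simp [h, h1]
  · push_neg at h
    have hne : ζ ^ j ≠ 1 :=
      hζ.pow_ne_one_of_pos_of_lt h.1 (lt_of_le_of_ne hj h.2)
    rw [if_neg (by push_neg; exact h), geom_sum_eq hne]
    rw [← pow_mul, mul_comm j N, pow_mul, hζ.pow_eq_one, one_pow, sub_self, zero_div]

private lemma avg_partial (N : ℕ) (hN : 0 < N) (z : ℂ) :
    (1 / (N : ℂ)) * ∑ k ∈ Finset.range N, ∑ j ∈ Finset.range (N + 1),
        (z * Complex.exp (2 * Real.pi * Complex.I * k / N)) ^ j / (j.factorial : ℂ)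
      = 1 + z ^ N / (N.factorial : ℂ) := by
  have hNc : (N : ℂ) ≠ 0 := Nat.cast_ne_zero.mpr hN.ne'
  rw [Finset.sum_comm]
  have hinner : ∀ j ∈ Finset.range (N + 1),
      (∑ k ∈ Finset.range N,
        (z * Complex.exp (2 * Real.pi * Complex.I * k / N)) ^ j / (j.factorial : ℂ))
      = z ^ j / (j.factorial : ℂ) * (if j = 0 ∨ j = N then (N : ℂ) else 0) := by
    intro j hjmem
    rw [← sum_roots_pow N hN j (Nat.lt_succ_iff.mp (Finset.mem_range.mp hjmem)),
      Finset.mul_sum]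
    refine Finset.sum_congr rfl fun k _ => ?_
    rw [mul_pow]
    ring
  rw [Finset.sum_congr rfl hinner]
  have hsplit : ∀ j ∈ Finset.range (N + 1),
      z ^ j / (j.factorial : ℂ) * (if j = 0 ∨ j = N then (N : ℂ) else 0)
      = (if j = 0 then z ^ j / (j.factorial : ℂ) * N else 0)
        + (if j = N then z ^ j / (j.factorial : ℂ) * N else 0) := by
    intro j _
    by_cases h0 : j = 0
    · subst h0
      simp [hN.ne]
    · by_cases hNn : j = N
      · subst hNn
        simp [h0]
      · simp [h0, hNn]
  rw [Finset.sum_congr rfl hsplit, Finset.sum_add_distrib,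
    Finset.sum_ite_eq' (Finset.range (N + 1)) 0, Finset.sum_ite_eq' (Finset.range (N + 1)) N]
  simp only [Finset.mem_range, Nat.succ_pos, if_pos, Nat.lt_succ_self, pow_zero,
    Nat.factorial_zero, Nat.cast_one]
  field_simp

private lemma avg_bound (N : ℕ) (hN : 0 < N) (z : ℂ) (hz : ‖z‖ ≤ 1) :
    ‖(1 / (N : ℂ)) * (∑ k ∈ Finset.range N,
        Complex.exp (z * Complex.exp (2 * Real.pi * Complex.I * k / N)))
        - (1 + z ^ N / (N.factorial : ℂ))‖
      ≤ ‖z‖ ^ (N + 1) * (((N + 2 : ℕ) : ℝ) * (((N + 1).factorial : ℝ) * ((N + 1 : ℕ) : ℝ))⁻¹) := by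
  have hNc : (N : ℂ) ≠ 0 := Nat.cast_ne_zero.mpr hN.ne'
  have habsω : ∀ k : ℕ, ‖Complex.exp (2 * Real.pi * Complex.I * k / N)‖ = 1 := by
    intro k
    have : (2 * (Real.pi : ℂ) * Complex.I * k / N) = ((2 * Real.pi * k / N : ℝ) : ℂ) * Complex.I := by
      push_cast
      ring
    rw [this, Complex.norm_exp_ofReal_mul_I]
  rw [← avg_partial N hN z, ← mul_sub, ← Finset.sum_sub_distrib, norm_mul, norm_div, norm_one,
    Complex.norm_natCast]
  have hbound : ∀ k ∈ Finset.range N,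
      ‖Complex.exp (z * Complex.exp (2 * Real.pi * Complex.I * k / N))
        - ∑ j ∈ Finset.range (N + 1),
            (z * Complex.exp (2 * Real.pi * Complex.I * k / N)) ^ j / (j.factorial : ℂ)‖
      ≤ ‖z‖ ^ (N + 1) * (((N + 2 : ℕ) : ℝ) * (((N + 1).factorial : ℝ) * ((N + 1 : ℕ) : ℝ))⁻¹) := by
    intro k _
    have habs : ‖z * Complex.exp (2 * Real.pi * Complex.I * k / N)‖ = ‖z‖ := by
      rw [norm_mul, habsω, mul_one]
    have hb := Complex.exp_bound (x := z * Complex.exp (2 * Real.pi * Complex.I * k / N))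
      (habs.le.trans hz) (n := N + 1) (Nat.succ_pos N)
    rw [habs] at hb
    convert hb using 2
  calc 1 / (N : ℝ) * ‖∑ k ∈ Finset.range N,
        (Complex.exp (z * Complex.exp (2 * Real.pi * Complex.I * k / N))
          - ∑ j ∈ Finset.range (N + 1),
              (z * Complex.exp (2 * Real.pi * Complex.I * k / N)) ^ j / (j.factorial : ℂ))‖
      ≤ 1 / (N : ℝ) * ∑ k ∈ Finset.range N,
          (‖z‖ ^ (N + 1) * (((N + 2 : ℕ) : ℝ) * (((N + 1).factorial : ℝ) * ((N + 1 : ℕ) : ℝ))⁻¹)) := by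
        gcongr
        exact (norm_sum_le _ _).trans (Finset.sum_le_sum hbound)
    _ = ‖z‖ ^ (N + 1) * (((N + 2 : ℕ) : ℝ) * (((N + 1).factorial : ℝ) * ((N + 1 : ℕ) : ℝ))⁻¹) := by
        rw [Finset.sum_const, Finset.card_range, nsmul_eq_mul]
        field_simp

private lemma pow_floor_tendsto (u : ℕ → ℂ) (c : ℂ) (t : ℝ) (ht : 0 ≤ t)
    (h : Filter.Tendsto (fun n : ℕ => (n : ℂ) * (u n - 1)) Filter.atTop (nhds c)) :
    Filter.Tendsto (fun n : ℕ => u n ^ ⌊(n : ℝ) * t⌋₊) Filter.atTop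
      (nhds (Complex.exp ((t : ℂ) * c))) := by
  have hinv : Filter.Tendsto (fun n : ℕ => ((n : ℂ))⁻¹) Filter.atTop (nhds 0) := by
    have h1 : Filter.Tendsto (fun n : ℕ => ((n : ℝ))⁻¹) Filter.atTop (nhds 0) :=
      tendsto_inv_atTop_zero.comp tendsto_natCast_atTop_atTop
    have h2 := (Complex.continuous_ofReal.tendsto 0).comp h1
    simpa [Function.comp_def] using h2
  have hu1 : Filter.Tendsto u Filter.atTop (nhds 1) := by
    have := hinv.mul h
    rw [zero_mul] at this
    have heq : ∀ᶠ n : ℕ in Filter.atTop, ((n : ℂ))⁻¹ * ((n : ℂ) * (u n - 1)) = u n - 1 := by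
      filter_upwards [Filter.eventually_ge_atTop 1] with n hn
      have : (n : ℂ) ≠ 0 := Nat.cast_ne_zero.mpr (by omega)
      field_simp
    have hsub : Filter.Tendsto (fun n => u n - 1) Filter.atTop (nhds 0) :=
      (this.congr' heq)
    have := hsub.add (tendsto_const_nhds (x := (1 : ℂ)))
    simpa using this
  -- little-o: log w - (w - 1) = o(w - 1) near 1
  have hd : HasDerivAt Complex.log 1 1 := by
    simpa using Complex.hasDerivAt_log Complex.one_mem_slitPlane
  have hlit : (fun w : ℂ => Complex.log w - (w - 1)) =o[nhds 1] fun w => w - 1 := by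
    have := hasDerivAt_iff_isLittleO.mp hd
    simpa [Complex.log_one] using this
  have ho : (fun n : ℕ => Complex.log (u n) - (u n - 1)) =o[Filter.atTop]
      fun n => u n - 1 := hlit.comp_tendsto hu1
  have ho2 : (fun n : ℕ => (n : ℂ) * (Complex.log (u n) - (u n - 1))) =o[Filter.atTop]
      fun n => (n : ℂ) * (u n - 1) :=
    (Asymptotics.isBigO_refl (fun n : ℕ => (n : ℂ)) Filter.atTop).mul_isLittleO ho
  have ho3 : Filter.Tendsto (fun n : ℕ => (n : ℂ) * (Complex.log (u n) - (u n - 1)))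
      Filter.atTop (nhds 0) :=
    (Asymptotics.isLittleO_one_iff ℂ).mp (ho2.trans_isBigO (h.isBigO_one ℂ))
  have hnlog : Filter.Tendsto (fun n : ℕ => (n : ℂ) * Complex.log (u n)) Filter.atTop (nhds c) := by
    have := ho3.add h
    rw [zero_add] at this
    refine this.congr fun n => ?_
    ring
  have hfloorR : Filter.Tendsto (fun n : ℕ => ((⌊(n : ℝ) * t⌋₊ : ℝ)) / (n : ℝ))
      Filter.atTop (nhds t) := by
    have h1 := (tendsto_nat_floor_mul_div_atTop ht).comp (tendsto_natCast_atTop_atTop (R := ℝ))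
    simpa [Function.comp_def, mul_comm] using h1
  have hfloorC : Filter.Tendsto (fun n : ℕ => ((⌊(n : ℝ) * t⌋₊ : ℂ)) / (n : ℂ))
      Filter.atTop (nhds (t : ℂ)) := by
    have h2 := (Complex.continuous_ofReal.tendsto t).comp hfloorR
    have : ∀ n : ℕ, (((⌊(n : ℝ) * t⌋₊ : ℝ) / (n : ℝ) : ℝ) : ℂ)
        = ((⌊(n : ℝ) * t⌋₊ : ℂ)) / (n : ℂ) := by
      intro n; push_cast; ring
    simpa [Function.comp_def, this] using h2
  have hmul : Filter.Tendsto (fun n : ℕ => ((⌊(n : ℝ) * t⌋₊ : ℂ)) * Complex.log (u n))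
      Filter.atTop (nhds ((t : ℂ) * c)) := by
    have h3 := hfloorC.mul hnlog
    refine h3.congr' ?_
    filter_upwards [Filter.eventually_ge_atTop 1] with n hn
    have hne : (n : ℂ) ≠ 0 := Nat.cast_ne_zero.mpr (by omega)
    field_simp
  have hexp := (Complex.continuous_exp.tendsto _).comp hmul
  refine hexp.congr' ?_
  filter_upwards [hu1.eventually_ne one_ne_zero] with n hn
  simp only [Function.comp]
  rw [Complex.exp_nat_mul, Complex.exp_log hn]


/-- for every t > 0 and λ ∈ ℂ, the characteristic functions of the
continuous-time walk at negative times (increments multiplied by the phase e^{iπ/N})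
converge: lim_n ((1/N)Σ_{k<N} exp(iλe^{iπ/N}βω_k/n^{1/N}))^{⌊nt⌋}
= exp(i^N λ^N α (−t)/N!). -/
theorem char_fun_Wn_negative_time (N : ℕ) (hN : 2 < N) (α β : ℂ) (hβ : β ^ N = α)
    (t : ℝ) (ht : 0 < t) (l : ℂ) :
    Filter.Tendsto
      (fun n : ℕ =>
        ((1 / (N : ℂ)) *
          ∑ k ∈ Finset.range N,
            Complex.exp (Complex.I * l * Complex.exp (Real.pi * Complex.I / N) * β *
              Complex.exp (2 * Real.pi * Complex.I * k / N) /
                ((((n : ℝ) ^ ((N : ℝ)⁻¹)) : ℝ) : ℂ))) ^ ⌊(n : ℝ) * t⌋₊)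
      Filter.atTop
      (nhds (Complex.exp (Complex.I ^ N * l ^ N * α * (-(t : ℂ)) / (Nat.factorial N : ℂ)))) := by
  have hN0 : 0 < N := by omega
  have hNc : (N : ℂ) ≠ 0 := Nat.cast_ne_zero.mpr hN0.ne'
  set c0 : ℂ := Complex.I * l * Complex.exp (Real.pi * Complex.I / N) * β with hc0
  set r : ℕ → ℝ := fun n => (n : ℝ) ^ ((N : ℝ)⁻¹) with hrdef
  set z : ℕ → ℂ := fun n => c0 / ((r n : ℝ) : ℂ) with hzdef
  set u : ℕ → ℂ := fun n => (1 / (N : ℂ)) * ∑ k ∈ Finset.range N,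
      Complex.exp (z n * Complex.exp (2 * Real.pi * Complex.I * k / N)) with hudef
  -- the goal function is u n ^ ⌊n t⌋
  have hfun : ∀ n : ℕ,
      ((1 / (N : ℂ)) * ∑ k ∈ Finset.range N,
        Complex.exp (Complex.I * l * Complex.exp (Real.pi * Complex.I / N) * β *
          Complex.exp (2 * Real.pi * Complex.I * k / N) /
            ((((n : ℝ) ^ ((N : ℝ)⁻¹)) : ℝ) : ℂ))) ^ ⌊(n : ℝ) * t⌋₊
      = u n ^ ⌊(n : ℝ) * t⌋₊ := by
    intro n
    rw [hudef]
    congr 2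
    refine Finset.sum_congr rfl fun k _ => ?_
    congr 1
    rw [hzdef, hc0]
    ring
  -- exponent constant
  have he : Complex.exp (Real.pi * Complex.I / N) ^ N = -1 := by
    rw [← Complex.exp_nat_mul]
    have harg : (N : ℂ) * (Real.pi * Complex.I / N) = Real.pi * Complex.I := by
      field_simp
    rw [harg, Complex.exp_pi_mul_I]
  have hc0N : c0 ^ N = -(Complex.I ^ N * l ^ N * α) := by
    rw [hc0, mul_pow, mul_pow, mul_pow, hβ, he]
    ring
  -- limits for r and z
  have hr : Filter.Tendsto r Filter.atTop Filter.atTop := by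
    have : (0 : ℝ) < (N : ℝ)⁻¹ := by positivity
    exact (tendsto_rpow_atTop this).comp tendsto_natCast_atTop_atTop
  have hz0 : Filter.Tendsto z Filter.atTop (nhds 0) := by
    have h1 : Filter.Tendsto (fun n => (r n)⁻¹) Filter.atTop (nhds 0) := hr.inv_tendsto_atTop
    have h2 := (Complex.continuous_ofReal.tendsto 0).comp h1
    have h3 : Filter.Tendsto (fun n => (((r n : ℝ) : ℂ))⁻¹) Filter.atTop (nhds 0) := by
      simpa [Function.comp_def, Complex.ofReal_inv] using h2
    have h4 := h3.const_mul c0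
    rw [mul_zero] at h4
    refine h4.congr fun n => ?_
    show c0 * (((r n : ℝ) : ℂ))⁻¹ = c0 / ((r n : ℝ) : ℂ)
    rw [div_eq_mul_inv]
  have habs_z : Filter.Tendsto (fun n => ‖z n‖) Filter.atTop (nhds 0) := by
    have := (continuous_norm.tendsto 0).comp hz0
    simpa [Function.comp_def] using this
  have hzN : ∀ n : ℕ, 1 ≤ n → (n : ℂ) * z n ^ N = c0 ^ N := by
    intro n hn
    have hnc : (n : ℂ) ≠ 0 := Nat.cast_ne_zero.mpr (by omega)
    have hrn : (((r n : ℝ) : ℂ)) ^ N = (n : ℂ) := by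
      rw [← Complex.ofReal_pow, hrdef]
      norm_cast
      exact Real.rpow_inv_natCast_pow (Nat.cast_nonneg n) hN0.ne'
    rw [hzdef]
    simp only
    rw [div_pow, hrn]
    field_simp
  -- constant D
  set D : ℝ := ((N + 2 : ℕ) : ℝ) * (((N + 1).factorial : ℝ) * ((N + 1 : ℕ) : ℝ))⁻¹ with hD
  have hD0 : 0 ≤ D := by positivity
  -- n * E n → 0
  have hE : Filter.Tendsto
      (fun n : ℕ => (n : ℂ) * (u n - (1 + z n ^ N / (N.factorial : ℂ))))
      Filter.atTop (nhds 0) := by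
    apply squeeze_zero_norm' (a := fun n => ‖c0 ^ N‖ * (‖z n‖ * D))
    · filter_upwards [Filter.eventually_ge_atTop 1,
        habs_z.eventually_lt_const (zero_lt_one)] with n hn hzn
      have hb := avg_bound N hN0 (z n) hzn.le
      have hnorm : ‖(n : ℂ) * (u n - (1 + z n ^ N / (N.factorial : ℂ)))‖
          = (n : ℝ) * ‖u n - (1 + z n ^ N / (N.factorial : ℂ))‖ := by
        rw [norm_mul, Complex.norm_natCast]
      rw [hnorm]
      have key : (n : ℝ) * ‖z n‖ ^ N = ‖c0 ^ N‖ := by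
        rw [← Complex.norm_natCast n, ← norm_pow, ← norm_mul, hzN n hn]
      calc (n : ℝ) * ‖u n - (1 + z n ^ N / (N.factorial : ℂ))‖
          ≤ (n : ℝ) * (‖z n‖ ^ (N + 1) * D) := by
            apply mul_le_mul_of_nonneg_left _ (Nat.cast_nonneg n)
            exact hb
        _ = ((n : ℝ) * ‖z n‖ ^ N) * (‖z n‖ * D) := by ring
        _ = ‖c0 ^ N‖ * (‖z n‖ * D) := by rw [key]
    · have := (habs_z.mul_const D).const_mul (‖c0 ^ N‖)
      simpa using this
  -- n (u n - 1) → c0^N / N!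
  have h2 : Filter.Tendsto (fun n : ℕ => (n : ℂ) * (u n - 1)) Filter.atTop
      (nhds (c0 ^ N / (N.factorial : ℂ))) := by
    have := hE.add (tendsto_const_nhds (x := c0 ^ N / (N.factorial : ℂ)))
    rw [zero_add] at this
    refine this.congr' ?_
    filter_upwards [Filter.eventually_ge_atTop 1] with n hn
    have hzn := hzN n hn
    calc (n : ℂ) * (u n - (1 + z n ^ N / (N.factorial : ℂ))) + c0 ^ N / (N.factorial : ℂ)
        = (n : ℂ) * (u n - 1) - ((n : ℂ) * z n ^ N) / (N.factorial : ℂ)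
            + c0 ^ N / (N.factorial : ℂ) := by ring
      _ = (n : ℂ) * (u n - 1) := by rw [hzn]; ring
  have hmain := pow_floor_tendsto u (c0 ^ N / (N.factorial : ℂ)) t ht.le h2
  have hexp_eq : Complex.exp ((t : ℂ) * (c0 ^ N / (N.factorial : ℂ)))
      = Complex.exp (Complex.I ^ N * l ^ N * α * (-(t : ℂ)) / (Nat.factorial N : ℂ)) := by
    congr 1
    rw [hc0N]
    ring
  rw [← hexp_eq]
  exact hmain.congr fun n => (hfun n).symm
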